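/- Let G be an undirected graph on n≥3 vertices. If for every symmetric positive definite n×n matrix A the thresholded matrix A_G is positive definite, then G is a disjoint union of complete components. -/

import Mathlib

def threshold {n : ℕ} (G : SimpleGraph (Fin n)) [DecidableRel G.Adj]
    (A : Matrix (Fin n) (Fin n) ℝ) : Matrix (Fin n) (Fin n) ℝ :=
  Matrix.of fun i j => if i = j ∨ G.Adj i j then A i j else 0

open Matrix

/-- If thresholding with respect to `G` preserves positive definiteness for every
symmetric positive definite matrix, then every connected component of `G` is complete,
i.e. `G` is a disjoint union of complete components. -/
theorem stmt_2 {n : ℕ} (hn : 3 ≤ n) (G : SimpleGraph (Fin n)) [DecidableRel G.Adj]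
    (h : ∀ A : Matrix (Fin n) (Fin n) ℝ, A.IsSymm → A.PosDef → (threshold G A).PosDef) :
    ∀ i j : Fin n, i ≠ j → G.Reachable i j → G.Adj i j := by
  have key : ∀ i k j : Fin n, G.Adj i k → G.Adj k j → i ≠ j → G.Adj i j := by
    intro i k j hik hkj hij
    by_contra hadj
    have hik' : i ≠ k := hik.ne
    have hkj' : k ≠ j := hkj.ne
    set v : Fin n → ℝ := fun l => if l = i then 1 else if l = j then 1 else if l = k then 2 else 0 with hv
    have vi : v i = 1 := by simp [hv]
    have vj : v j = 1 := by simp [hv, Ne.symm hij]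
    have vk : v k = 2 := by simp [hv, Ne.symm hik', hkj']
    set A : Matrix (Fin n) (Fin n) ℝ :=
      Matrix.of (fun a b => (if a = b then (1/2:ℝ) else 0) + v a * v b) with hA
    have hAsymm : A.IsSymm := by
      ext a b
      simp only [hA, Matrix.transpose_apply, Matrix.of_apply, eq_comm, mul_comm]
    have hmul : ∀ x : Fin n → ℝ, A *ᵥ x = fun a => (1/2) * x a + v a * (∑ b, v b * x b) := by
      intro x
      funext a
      simp only [hA, Matrix.mulVec, dotProduct, Matrix.of_apply, add_mul, ite_mul,
        zero_mul, Finset.sum_add_distrib, mul_assoc, ← Finset.mul_sum]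
      rw [Finset.sum_ite_eq Finset.univ a (fun b => (1/2 : ℝ) * x b)]
      simp
    have hpd : A.PosDef := by
      refine Matrix.posDef_iff_dotProduct_mulVec.mpr ⟨?_, ?_⟩
      · show Aᴴ = A
        have : Aᴴ = Aᵀ := by
          ext a b
          simp [Matrix.conjTranspose_apply]
        rw [this]
        exact hAsymm
      · intro x hx
        rw [hmul]
        have hform : dotProduct (star x) (fun a => (1/2) * x a + v a * (∑ b, v b * x b))
            = (1/2) * (∑ a, x a ^ 2) + (∑ b, v b * x b) * (∑ b, v b * x b) := by
          calc dotProduct (star x) (fun a => (1/2) * x a + v a * (∑ b, v b * x b))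
              = ∑ a, ((1/2) * x a ^ 2 + (v a * x a) * (∑ b, v b * x b)) := by
                simp only [dotProduct, star_trivial]
                exact Finset.sum_congr rfl fun a _ => by ring
            _ = (1/2) * (∑ a, x a ^ 2) + (∑ a, v a * x a) * (∑ b, v b * x b) := by
                rw [Finset.sum_add_distrib, ← Finset.mul_sum, ← Finset.sum_mul]
            _ = _ := rfl
        rw [hform]
        obtain ⟨a, ha⟩ := Function.ne_iff.mp hx
        have h1 : 0 < ∑ a, x a ^ 2 := by
          have h2 : (0:ℝ) < x a ^ 2 :=
            lt_of_le_of_ne (sq_nonneg _) (Ne.symm (pow_ne_zero 2 ha))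
          exact lt_of_lt_of_le h2
            (Finset.single_le_sum (fun b _ => sq_nonneg (x b)) (Finset.mem_univ a))
        have h3 := mul_self_nonneg (∑ b, v b * x b)
        linarith
    have hpdT := h A hAsymm hpd
    set B := threshold G A with hB
    set x : Fin n → ℝ := fun l => if l = i then 1 else if l = j then 1 else if l = k then -1 else 0 with hx
    have hxne : x ≠ 0 := by
      intro h0
      have := congrFun h0 i
      simp [hx] at this
    have sumx : ∀ f : Fin n → ℝ, ∑ a, x a * f a = f i + f j - f k := by
      intro f
      have step : ∀ a, x a * f a =
          (if a = i then f a else 0) + (if a = j then f a else 0) + (if a = k then -f a else 0) := by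
        intro a
        by_cases h1 : a = i
        · subst h1; simp [hx, hij, hik']
        · by_cases h2 : a = j
          · subst h2
            simp [hx, h1, Ne.symm hkj']
          · by_cases h3 : a = k
            · subst h3
              simp [hx, h1, h2]
            · simp [hx, h1, h2, h3]
      rw [Finset.sum_congr rfl fun a _ => step a]
      simp only [Finset.sum_add_distrib]
      rw [Finset.sum_ite_eq' Finset.univ i f, Finset.sum_ite_eq' Finset.univ j f,
        Finset.sum_ite_eq' Finset.univ k (fun a => -f a)]
      simp
      ring
    have hdot : dotProduct (star x) (B *ᵥ x) =
        (B i i + B i j - B i k) + (B j i + B j j - B j k) - (B k i + B k j - B k k) := by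
      simp only [star_trivial, dotProduct, Matrix.mulVec]
      have inner : ∀ a, (fun b => B a b) ⬝ᵥ x = B a i + B a j - B a k := by
        intro a
        rw [dotProduct]
        rw [show (∑ b, B a b * x b) = ∑ b, x b * B a b from
          Finset.sum_congr rfl fun b _ => mul_comm _ _]
        exact sumx (fun b => B a b)
      calc (∑ a, x a * (fun b => B a b) ⬝ᵥ x) = ∑ a, x a * (B a i + B a j - B a k) := by
            exact Finset.sum_congr rfl fun a _ => by rw [inner a]
        _ = _ := sumx _
    have hBval : (B i i + B i j - B i k) + (B j i + B j j - B j k) - (B k i + B k j - B k k) = -1/2 := by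
      have hji : ¬ G.Adj j i := fun hh => hadj hh.symm
      have hki : G.Adj k i := hik.symm
      have hjk : G.Adj j k := hkj.symm
      simp only [hB, threshold, Matrix.of_apply, hA]
      simp [hij, hadj, hji, hik, hki, hkj, hjk, hik', hkj', Ne.symm hij, Ne.symm hik',
        Ne.symm hkj', vi, vj, vk]
      norm_num
    have hpos := hpdT.dotProduct_mulVec_pos hxne
    rw [hdot, hBval] at hpos
    norm_num at hpos
  intro i j hij hr
  obtain ⟨w⟩ := hr
  clear hn
  revert hij
  induction w with
  | nil => exact fun hij => absurd rfl hij
  | @cons u a b hadj p ih =>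
    intro hij
    by_cases hab : a = b
    · exact hab ▸ hadj
    · exact key u a b hadj (ih hab) hij
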